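/- The function C_ρ(t) := (t²/2) · ₂F₁(5/6, 5/6; 5/3; -2t³) / ₂F₁(1/6, 1/6; 1/3; -2t³) is well-defined and holomorphic on the disc |t| < 1/∛2, and satisfies C_ρ(0) = 0. -/

import Mathlib

open Complex

/-- The Gaussian hypergeometric series. -/
noncomputable def hyp2F1 (a b c z : ℂ) : ℂ :=
  ∑' n : ℕ, (ascPochhammer ℂ n).eval a * (ascPochhammer ℂ n).eval b /
    ((ascPochhammer ℂ n).eval c * (n.factorial : ℂ)) * z ^ n

/-- `C_ρ(t) = (t²/2) · ₂F₁(5/6,5/6;5/3;-2t³)/₂F₁(1/6,1/6;1/3;-2t³)`. -/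
noncomputable def Crho (t : ℂ) : ℂ :=
  t ^ 2 / 2 * hyp2F1 (5/6) (5/6) (5/3) (-2 * t ^ 3) /
    hyp2F1 (1/6) (1/6) (1/3) (-2 * t ^ 3)

namespace Stmt4Aux

/-- Real coefficients of `₂F₁(a,a;c;·)`. -/
noncomputable def coef (a c : ℝ) (n : ℕ) : ℝ :=
  (ascPochhammer ℝ n).eval a * (ascPochhammer ℝ n).eval a /
    ((ascPochhammer ℝ n).eval c * (n.factorial : ℝ))

lemma coef_zero (a c : ℝ) : coef a c 0 = 1 := by simp [coef]

lemma poch_cast (x : ℝ) : ∀ n : ℕ,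
    (ascPochhammer ℂ n).eval (x : ℂ) = (((ascPochhammer ℝ n).eval x : ℝ) : ℂ)
  | 0 => by simp
  | n + 1 => by
    rw [ascPochhammer_succ_eval, ascPochhammer_succ_eval, poch_cast x n]
    push_cast
    ring

lemma hyp_eq (a c : ℝ) (z : ℂ) :
    hyp2F1 (a : ℂ) (a : ℂ) (c : ℂ) z = ∑' n : ℕ, (coef a c n : ℂ) * z ^ n := by
  unfold hyp2F1
  refine tsum_congr fun n => ?_
  rw [poch_cast, poch_cast, coef]
  push_cast
  ring

variable {a c : ℝ}

lemma coef_pos (ha : 0 < a) (hc : 0 < c) (n : ℕ) : 0 < coef a c n := by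
  have h1 := ascPochhammer_pos n a ha
  have h2 := ascPochhammer_pos n c hc
  have h3 : (0 : ℝ) < n.factorial := by positivity
  exact div_pos (mul_pos h1 h1) (mul_pos h2 h3)

lemma coef_succ (ha : 0 < a) (hc : 0 < c) (n : ℕ) :
    coef a c (n + 1) = coef a c n * ((a + n) * (a + n) / ((c + n) * (n + 1))) := by
  have h2 : (ascPochhammer ℝ n).eval c ≠ 0 := (ascPochhammer_pos n c hc).ne'
  have h3 : ((n.factorial : ℝ)) ≠ 0 := by positivity
  have h4 : (c + n) ≠ 0 := by positivity
  have h5 : ((n : ℝ) + 1) ≠ 0 := by positivity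
  rw [coef, coef, ascPochhammer_succ_eval, ascPochhammer_succ_eval, Nat.factorial_succ]
  push_cast
  field_simp

lemma coef_antitone (ha : 0 < a) (hc : 0 < c) (hac : a ≤ c) (ha1 : a ≤ 1) (n : ℕ) :
    coef a c (n + 1) ≤ coef a c n := by
  rw [coef_succ ha hc]
  have hpos := coef_pos ha hc n
  have hratio : (a + n) * (a + n) / ((c + n) * (n + 1)) ≤ 1 := by
    rw [div_le_one (by positivity)]
    have h1 : a + (n : ℝ) ≤ c + n := by linarith
    have h2 : a + (n : ℝ) ≤ n + 1 := by linarith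
    nlinarith [show (0:ℝ) < a + n by positivity]
  nlinarith

lemma coef_le_one (ha : 0 < a) (hc : 0 < c) (hac : a ≤ c) (ha1 : a ≤ 1) (n : ℕ) :
    coef a c n ≤ 1 := by
  induction n with
  | zero => simp [coef_zero]
  | succ k ih => exact le_trans (coef_antitone ha hc hac ha1 k) ih

set_option maxHeartbeats 1000000 in
/-- A power series with coefficients `1 = b 0 ≥ b 1 ≥ … ≥ 0` does not vanish
on the open unit disc. -/
lemma tsum_ne_zero {b : ℕ → ℝ} (hb0 : b 0 = 1) (hpos : ∀ n, 0 < b n)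
    (hant : ∀ n, b (n + 1) ≤ b n) (hle1 : ∀ n, b n ≤ 1) {z : ℂ} (hz : ‖z‖ < 1) :
    (∑' n : ℕ, (b n : ℂ) * z ^ n) ≠ 0 := by
  have hnorm : ∀ n : ℕ, ‖(b n : ℂ) * z ^ n‖ = b n * ‖z‖ ^ n := by
    intro n
    rw [norm_mul, norm_pow, Complex.norm_real, Real.norm_of_nonneg (hpos n).le]
  have hs : Summable fun n : ℕ => (b n : ℂ) * z ^ n := by
    apply Summable.of_norm
    apply Summable.of_nonneg_of_le (fun n => norm_nonneg _)
      (fun n => ?_) (summable_geometric_of_lt_one (norm_nonneg z) hz)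
    rw [hnorm]
    calc b n * ‖z‖ ^ n ≤ 1 * ‖z‖ ^ n := by
          have := pow_nonneg (norm_nonneg z) n
          nlinarith [hle1 n]
      _ = ‖z‖ ^ n := one_mul _
  have hs' : Summable fun n : ℕ => (b (n + 1) : ℂ) * z ^ (n + 1) :=
    (summable_nat_add_iff 1).mpr hs
  have hzs : Summable fun n : ℕ => (b n : ℂ) * z ^ (n + 1) := by
    have := hs.mul_left z
    refine this.congr fun n => ?_
    ring
  intro hF
  -- `(1 - z) * F = 1 + S` where `S = ∑ (b (n+1) - b n) z^(n+1)`
  have h1 : (∑' n : ℕ, (b n : ℂ) * z ^ n)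
      = 1 + ∑' n : ℕ, (b (n + 1) : ℂ) * z ^ (n + 1) := by
    rw [Summable.tsum_eq_zero_add hs, hb0]
    norm_num
  have h2 : z * (∑' n : ℕ, (b n : ℂ) * z ^ n) = ∑' n : ℕ, (b n : ℂ) * z ^ (n + 1) := by
    rw [← tsum_mul_left]
    exact tsum_congr fun n => by ring
  have hS : (∑' n : ℕ, ((b (n + 1) : ℂ) * z ^ (n + 1) - (b n : ℂ) * z ^ (n + 1))) = -1 := by
    rw [Summable.tsum_sub hs' hzs, ← h2, hF]
    rw [hF] at h1
    simp only [mul_zero]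
    linear_combination -h1
  -- bound the norm of S
  have hd : Summable fun n : ℕ => b n - b (n + 1) := by
    apply summable_of_sum_range_le (c := 1) (fun n => by linarith [hant n])
    intro n
    rw [Finset.sum_range_sub' b n, hb0]
    linarith [(hpos n).le]
  have hdsum : (∑' n : ℕ, (b n - b (n + 1))) ≤ 1 := by
    apply Real.tsum_le_of_sum_range_le (fun n => by linarith [hant n])
    intro n
    rw [Finset.sum_range_sub' b n, hb0]
    linarith [(hpos n).le]
  have hbound : ‖∑' n : ℕ, ((b (n + 1) : ℂ) * z ^ (n + 1) - (b n : ℂ) * z ^ (n + 1))‖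
      ≤ ‖z‖ := by
    have hterm : ∀ n : ℕ, ‖(b (n + 1) : ℂ) * z ^ (n + 1) - (b n : ℂ) * z ^ (n + 1)‖
        = (b n - b (n + 1)) * ‖z‖ ^ (n + 1) := by
      intro n
      rw [show (b (n + 1) : ℂ) * z ^ (n + 1) - (b n : ℂ) * z ^ (n + 1)
          = -((((b n - b (n + 1) : ℝ)) : ℂ) * z ^ (n + 1)) by push_cast; ring]
      rw [norm_neg, norm_mul, norm_pow, Complex.norm_real,
        Real.norm_of_nonneg (by linarith [hant n])]
    have hterm_le : ∀ n : ℕ, (b n - b (n + 1)) * ‖z‖ ^ (n + 1)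
        ≤ (b n - b (n + 1)) * ‖z‖ := by
      intro n
      apply mul_le_mul_of_nonneg_left _ (by linarith [hant n])
      calc ‖z‖ ^ (n + 1) ≤ ‖z‖ ^ 1 :=
            pow_le_pow_of_le_one (norm_nonneg z) hz.le (by omega)
        _ = ‖z‖ := pow_one _
    have hsnorm : Summable fun n : ℕ =>
        ‖(b (n + 1) : ℂ) * z ^ (n + 1) - (b n : ℂ) * z ^ (n + 1)‖ := by
      apply Summable.of_nonneg_of_le (fun n => norm_nonneg _) (fun n => ?_)
        (hd.mul_right ‖z‖)
      rw [hterm n]; exact hterm_le n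
    calc ‖∑' n : ℕ, ((b (n + 1) : ℂ) * z ^ (n + 1) - (b n : ℂ) * z ^ (n + 1))‖
        ≤ ∑' n : ℕ, ‖(b (n + 1) : ℂ) * z ^ (n + 1) - (b n : ℂ) * z ^ (n + 1)‖ :=
          norm_tsum_le_tsum_norm hsnorm
      _ ≤ ∑' n : ℕ, (b n - b (n + 1)) * ‖z‖ := by
          apply Summable.tsum_le_tsum _ hsnorm (hd.mul_right ‖z‖)
          intro n
          rw [hterm n]; exact hterm_le n
      _ = (∑' n : ℕ, (b n - b (n + 1))) * ‖z‖ := tsum_mul_right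
      _ ≤ 1 * ‖z‖ := mul_le_mul_of_nonneg_right hdsum (norm_nonneg z)
      _ = ‖z‖ := one_mul _
  rw [hS] at hbound
  simp only [norm_neg, norm_one] at hbound
  linarith

/-- A power series with coefficients bounded by `1` is differentiable on the
open unit disc. -/
lemma diffOn {b : ℕ → ℝ} (hb : ∀ n, |b n| ≤ 1) :
    DifferentiableOn ℂ (fun z : ℂ => ∑' n : ℕ, (b n : ℂ) * z ^ n)
      (Metric.ball (0 : ℂ) 1) := by
  set p : FormalMultilinearSeries ℂ ℂ ℂ :=
    FormalMultilinearSeries.ofScalars ℂ (fun n => (b n : ℂ)) with hp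
  have hrad : (1 : ENNReal) ≤ p.radius := by
    have h1 : ∀ n : ℕ, ‖p n‖ * ((1 : NNReal) : ℝ) ^ n ≤ 1 := by
      intro n
      rw [hp, FormalMultilinearSeries.ofScalars_norm]
      simpa [Complex.norm_real, Real.norm_eq_abs] using hb n
    simpa using p.le_radius_of_bound 1 h1
  have hball : HasFPowerSeriesOnBall p.sum p 0 p.radius :=
    p.hasFPowerSeriesOnBall (lt_of_lt_of_le one_pos hrad)
  have hdiff : DifferentiableOn ℂ p.sum (Metric.eball (0 : ℂ) p.radius) :=
    hball.differentiableOn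
  have hsum_eq : (fun z : ℂ => ∑' n : ℕ, (b n : ℂ) * z ^ n) = p.sum := by
    funext z
    rw [FormalMultilinearSeries.sum]
    refine tsum_congr fun n => ?_
    rw [hp, FormalMultilinearSeries.ofScalars_apply_eq, smul_eq_mul]
  rw [hsum_eq]
  apply hdiff.mono
  intro z hz
  rw [EMetric.mem_ball, edist_zero_right]
  calc ‖z‖₊ < (1 : ENNReal) := by
        rw [← ENNReal.coe_one, ENNReal.coe_lt_coe, ← NNReal.coe_lt_coe]
        simpa using (Metric.mem_ball.mp hz)
    _ ≤ p.radius := hrad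
end Stmt4Aux

open Stmt4Aux in
/-- `C_ρ` is well-defined (denominator nonvanishing) and holomorphic on
`|t| < 1/∛2`, with `C_ρ(0) = 0`. -/
theorem stmt_4 :
    (∀ t ∈ Metric.ball (0 : ℂ) (1 / (2 : ℝ) ^ ((1 : ℝ)/3)),
      hyp2F1 (1/6) (1/6) (1/3) (-2 * t ^ 3) ≠ 0) ∧
    DifferentiableOn ℂ Crho (Metric.ball (0 : ℂ) (1 / (2 : ℝ) ^ ((1 : ℝ)/3))) ∧
    Crho 0 = 0 := by
  have c16 : ((1 : ℂ)/6) = (((1 : ℝ)/6 : ℝ) : ℂ) := by norm_num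
  have c13 : ((1 : ℂ)/3) = (((1 : ℝ)/3 : ℝ) : ℂ) := by norm_num
  have c56 : ((5 : ℂ)/6) = (((5 : ℝ)/6 : ℝ) : ℂ) := by norm_num
  have c53 : ((5 : ℂ)/3) = (((5 : ℝ)/3 : ℝ) : ℂ) := by norm_num
  set B := Metric.ball (0 : ℂ) (1 / (2 : ℝ) ^ ((1 : ℝ)/3)) with hB
  have hmap : ∀ t ∈ B, ‖-2 * t ^ 3‖ < 1 := by
    intro t ht
    rw [hB, Metric.mem_ball, dist_zero_right] at ht
    have hcube : ((2 : ℝ) ^ ((1 : ℝ)/3)) ^ (3 : ℕ) = 2 := by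
      rw [← Real.rpow_natCast ((2 : ℝ) ^ ((1 : ℝ)/3)) 3,
        ← Real.rpow_mul (by norm_num : (0:ℝ) ≤ 2)]
      norm_num
    have h3 : ‖t‖ ^ 3 < (1 / (2 : ℝ) ^ ((1 : ℝ)/3)) ^ 3 :=
      pow_lt_pow_left₀ ht (norm_nonneg t) (by norm_num)
    rw [div_pow, one_pow, hcube] at h3
    have hn : ‖(-2 : ℂ) * t ^ 3‖ = 2 * ‖t‖ ^ 3 := by
      rw [norm_mul, norm_pow]
      norm_num
    rw [hn]
    linarith
  have hden : ∀ t ∈ B, (∑' n : ℕ,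
      ((coef ((1:ℝ)/6) ((1:ℝ)/3) n : ℝ) : ℂ) * (-2 * t ^ 3) ^ n) ≠ 0 := by
    intro t ht
    exact tsum_ne_zero (coef_zero _ _)
      (fun n => coef_pos (by norm_num) (by norm_num) n)
      (fun n => coef_antitone (by norm_num) (by norm_num) (by norm_num) (by norm_num) n)
      (fun n => coef_le_one (by norm_num) (by norm_num) (by norm_num) (by norm_num) n)
      (hmap t ht)
  have habs : ∀ (a c : ℝ), 0 < a → 0 < c → a ≤ c → a ≤ 1 →
      ∀ n, |coef a c n| ≤ 1 := by
    intro a c ha hc hac ha1 n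
    rw [abs_of_pos (coef_pos ha hc n)]
    exact coef_le_one ha hc hac ha1 n
  have dinner : DifferentiableOn ℂ (fun t : ℂ => -2 * t ^ 3) B :=
    ((differentiable_const (-2 : ℂ)).mul (differentiable_pow 3)).differentiableOn
  have hmapsTo : Set.MapsTo (fun t : ℂ => -2 * t ^ 3) B (Metric.ball (0 : ℂ) 1) := by
    intro t ht
    rw [Metric.mem_ball, dist_zero_right]
    exact hmap t ht
  have d1 : DifferentiableOn ℂ
      (fun t : ℂ => ∑' n : ℕ, ((coef ((5:ℝ)/6) ((5:ℝ)/3) n : ℝ) : ℂ) * (-2 * t ^ 3) ^ n) B :=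
    (diffOn (habs _ _ (by norm_num) (by norm_num) (by norm_num) (by norm_num))).comp
      dinner hmapsTo
  have d2 : DifferentiableOn ℂ
      (fun t : ℂ => ∑' n : ℕ, ((coef ((1:ℝ)/6) ((1:ℝ)/3) n : ℝ) : ℂ) * (-2 * t ^ 3) ^ n) B :=
    (diffOn (habs _ _ (by norm_num) (by norm_num) (by norm_num) (by norm_num))).comp
      dinner hmapsTo
  have hrw : Crho = fun t : ℂ =>
      t ^ 2 / 2 * (∑' n : ℕ, ((coef ((5:ℝ)/6) ((5:ℝ)/3) n : ℝ) : ℂ) * (-2 * t ^ 3) ^ n) /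
        ∑' n : ℕ, ((coef ((1:ℝ)/6) ((1:ℝ)/3) n : ℝ) : ℂ) * (-2 * t ^ 3) ^ n := by
    funext t
    rw [Crho, c16, c13, c56, c53, hyp_eq, hyp_eq]
  refine ⟨?_, ?_, ?_⟩
  · intro t ht
    rw [c16, c13, hyp_eq]
    exact hden t ht
  · rw [hrw]
    exact ((((differentiable_pow 2).div_const (2 : ℂ)).differentiableOn).mul d1).div d2 hden
  · rw [Crho]
    norm_num
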